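/- The set of poles of the meromorphic continuation of s ↦ 2(4/9)^s + 2·27^{-s}/(1 − 2·3^{-s}) is {log_3 2 + 2πim/log 3 : m ∈ ℤ}, the same as the complex dimensions of the Cantor string. -/
import Mathlib

open Complex

lemma cpow_neg_analytic (c : ℂ) (hc : 0 < c.re) (s : ℂ) :
    AnalyticAt ℂ (fun z : ℂ => c ^ (-z)) s :=
  analyticAt_const.cpow (analyticAt_id.neg) (Or.inl hc)

lemma denom_zero_iff (s : ℂ) :
    1 - 2 * (3 : ℂ) ^ (-s) = 0 ↔
      ∃ m : ℤ, s = Real.log 2 / Real.log 3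
          + 2 * Real.pi * Complex.I * m / Real.log 3 := by
  have h3 : (Real.log 3 : ℂ) ≠ 0 := by
    simp only [ne_eq, Complex.ofReal_eq_zero]
    positivity
  have hlog : Complex.log 3 = (Real.log 3 : ℂ) := by
    rw [show (3:ℂ) = ((3:ℝ):ℂ) by norm_num, Complex.ofReal_log (by norm_num)]
  have hcp : (3 : ℂ) ^ (-s) = Complex.exp (-s * (Real.log 3 : ℂ)) := by
    rw [Complex.cpow_def_of_ne_zero (by norm_num), hlog, mul_comm]
  have hhalf : Complex.exp (-(Real.log 2 : ℂ)) = 1 / 2 := by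
    rw [show (-(Real.log 2 : ℂ)) = ((-Real.log 2 : ℝ) : ℂ) by push_cast; ring,
      ← Complex.ofReal_exp, Real.exp_neg, Real.exp_log (by norm_num)]
    norm_num
  rw [hcp]
  constructor
  · intro h
    have he : Complex.exp (-s * (Real.log 3 : ℂ)) = Complex.exp (-(Real.log 2 : ℂ)) := by
      rw [hhalf]; linear_combination -h / 2
    obtain ⟨n, hn⟩ := Complex.exp_eq_exp_iff_exists_int.mp he
    refine ⟨-n, ?_⟩
    have hs : s = ((Real.log 2 : ℂ) - n * (2 * Real.pi * I)) / (Real.log 3 : ℂ) := by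
      rw [eq_div_iff h3]; linear_combination -hn
    rw [hs, Int.cast_neg]
    ring
  · rintro ⟨m, rfl⟩
    have he : -(↑(Real.log 2) / ↑(Real.log 3) + 2 * ↑Real.pi * Complex.I * ↑m / ↑(Real.log 3))
        * (Real.log 3 : ℂ)
        = -(Real.log 2 : ℂ) + ((-m : ℤ) : ℂ) * (2 * Real.pi * Complex.I) := by
      rw [neg_mul, add_mul, div_mul_cancel₀ _ h3, div_mul_cancel₀ _ h3]
      push_cast
      ring
    rw [he, Complex.exp_add, hhalf, Complex.exp_int_mul_two_pi_mul_I]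
    norm_num

lemma denom_analytic (s : ℂ) :
    AnalyticAt ℂ (fun z : ℂ => 1 - 2 * (3 : ℂ) ^ (-z)) s :=
  analyticAt_const.sub (analyticAt_const.mul (cpow_neg_analytic 3 (by norm_num) s))

theorem topological_zeta_poles_cantor :
    {s : ℂ | ¬ AnalyticAt ℂ
        (fun z : ℂ => 2 * (4 / 9 : ℂ) ^ z
          + 2 * (27 : ℂ) ^ (-z) / (1 - 2 * (3 : ℂ) ^ (-z))) s}
      = {s : ℂ | ∃ m : ℤ, s = Real.log 2 / Real.log 3
          + 2 * Real.pi * Complex.I * m / Real.log 3} := by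
  ext s
  simp only [Set.mem_setOf_eq, ← denom_zero_iff]
  constructor
  · -- if not analytic then denominator vanishes
    intro h
    by_contra hne
    apply h
    have h49 : AnalyticAt ℂ (fun z : ℂ => 2 * (4 / 9 : ℂ) ^ z) s :=
      analyticAt_const.mul (analyticAt_const.cpow analyticAt_id (Or.inl (by norm_num)))
    have h27 : AnalyticAt ℂ (fun z : ℂ => 2 * (27 : ℂ) ^ (-z)) s :=
      analyticAt_const.mul (cpow_neg_analytic 27 (by norm_num) s)
    exact h49.add (h27.div (denom_analytic s) hne)
  · -- denominator vanishes → not analytic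
    intro h0 hA
    -- g = the fractional part, analytic at s
    have h49 : AnalyticAt ℂ (fun z : ℂ => 2 * (4 / 9 : ℂ) ^ z) s :=
      analyticAt_const.mul (analyticAt_const.cpow analyticAt_id (Or.inl (by norm_num)))
    have hg : AnalyticAt ℂ
        (fun z : ℂ => 2 * (27 : ℂ) ^ (-z) / (1 - 2 * (3 : ℂ) ^ (-z))) s := by
      have h2 := hA.sub h49
      have : (fun z : ℂ => 2 * (27 : ℂ) ^ (-z) / (1 - 2 * (3 : ℂ) ^ (-z)))
          = (fun z : ℂ => 2 * (4 / 9 : ℂ) ^ z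
            + 2 * (27 : ℂ) ^ (-z) / (1 - 2 * (3 : ℂ) ^ (-z)))
            - (fun z : ℂ => 2 * (4 / 9 : ℂ) ^ z) := by
        funext z; simp
      rw [this]; exact h2
    -- h = g * denominator, analytic at s
    have hh : AnalyticAt ℂ
        (fun z : ℂ => (2 * (27 : ℂ) ^ (-z) / (1 - 2 * (3 : ℂ) ^ (-z)))
          * (1 - 2 * (3 : ℂ) ^ (-z))) s := hg.mul (denom_analytic s)
    -- denominator has isolated zeros
    have hiso : ∀ᶠ z in nhdsWithin s {s}ᶜ, 1 - 2 * (3 : ℂ) ^ (-z) ≠ 0 := by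
      rcases (denom_analytic s).eventually_eq_zero_or_eventually_ne_zero with hz | hz
      · exfalso
        have hall : AnalyticOnNhd ℂ (fun z : ℂ => 1 - 2 * (3 : ℂ) ^ (-z)) Set.univ :=
          fun z _ => denom_analytic z
        have := hall.eqOn_zero_of_preconnected_of_eventuallyEq_zero
          isPreconnected_univ (Set.mem_univ s) hz (Set.mem_univ 0)
        simp [Complex.cpow_zero] at this
        norm_num at this
      · exact hz
    -- h = 2 * 27^{-z} on punctured nbhd
    have heq : (fun z : ℂ => (2 * (27 : ℂ) ^ (-z) / (1 - 2 * (3 : ℂ) ^ (-z)))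
          * (1 - 2 * (3 : ℂ) ^ (-z)))
        =ᶠ[nhdsWithin s {s}ᶜ] (fun z : ℂ => 2 * (27 : ℂ) ^ (-z)) := by
      filter_upwards [hiso] with z hz
      field_simp
    -- take limits
    have hval : (2 * (27 : ℂ) ^ (-s) / (1 - 2 * (3 : ℂ) ^ (-s)))
          * (1 - 2 * (3 : ℂ) ^ (-s)) = 2 * (27 : ℂ) ^ (-s) := by
      have t1 : Filter.Tendsto
          (fun z : ℂ => (2 * (27 : ℂ) ^ (-z) / (1 - 2 * (3 : ℂ) ^ (-z)))
            * (1 - 2 * (3 : ℂ) ^ (-z))) (nhdsWithin s {s}ᶜ)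
          (nhds ((2 * (27 : ℂ) ^ (-s) / (1 - 2 * (3 : ℂ) ^ (-s)))
            * (1 - 2 * (3 : ℂ) ^ (-s)))) :=
        (hh.continuousAt.tendsto).mono_left nhdsWithin_le_nhds
      have t2 : Filter.Tendsto
          (fun z : ℂ => (2 * (27 : ℂ) ^ (-z) / (1 - 2 * (3 : ℂ) ^ (-z)))
            * (1 - 2 * (3 : ℂ) ^ (-z))) (nhdsWithin s {s}ᶜ)
          (nhds (2 * (27 : ℂ) ^ (-s))) := by
        refine Filter.Tendsto.congr' heq.symm ?_
        exact ((analyticAt_const.mul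
          (cpow_neg_analytic 27 (by norm_num) s)).continuousAt.tendsto).mono_left
          nhdsWithin_le_nhds
      exact tendsto_nhds_unique t1 t2
    rw [h0, mul_zero] at hval
    have hne27 : (27 : ℂ) ^ (-s) ≠ 0 := by
      rw [ne_eq, Complex.cpow_eq_zero_iff]
      norm_num
    have : (2 : ℂ) * (27 : ℂ) ^ (-s) ≠ 0 := by
      exact mul_ne_zero (by norm_num) hne27
    exact this hval.symm
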